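/- Let I ≥ 1, M_i ≥ 1, let g_i : ℝ^{M_i} → (−∞,+∞] be measurable, let α_i, β_i > 0 with η_i² = α_i² + β_i², and let w_i ∈ ℝ^{M_i} for i ∈ {1,…,I}. Then, as an equality in [0,+∞], ∫_{∏_i (ℝ^{M_i} × ℝ^{M_i})} exp(−∑_{i=1}^I [ g_i(z_i) + ‖w_i − z_i + u_i‖²/(2α_i²) + ‖u_i‖²/(2β_i²) ]) d(z,u) = ∏_{i=1}^I (2π α_i²β_i²/(α_i²+β_i²))^{M_i/2} · ∏_{i=1}^I ∫_{ℝ^{M_i}} exp(−g_i(z_i) − ‖w_i − z_i‖²/(2η_i²)) dz_i. -/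

import Mathlib

open MeasureTheory

section AXDAhelper
open Real Fintype

theorem my_lintegral_fin_prod {n : ℕ} {E : Fin n → Type*}
    [∀ i, MeasureSpace (E i)] [∀ i, SigmaFinite (volume : Measure (E i))]
    {f : (i : Fin n) → E i → ENNReal} (hf : ∀ i, Measurable (f i)) :
    ∫⁻ x : (i : Fin n) → E i, ∏ i, f i (x i) = ∏ i, ∫⁻ x, f i x := by
  induction n with
  | zero => simp [volume_pi, Measure.pi_empty_univ]
  | succ n ih =>
    have A := ((measurePreserving_piFinSuccAbove (fun i => (volume : Measure (E i))) 0).symm)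
    rw [volume_pi, ← A.map_eq, lintegral_map_equiv]
    simp_rw [MeasurableEquiv.piFinSuccAbove_symm_apply, Fin.insertNthEquiv,
      Fin.prod_univ_succ, Fin.insertNth_zero, Equiv.coe_fn_mk, Fin.cons_succ,
      Fin.zero_succAbove, Fin.cons_zero]
    have hgm : Measurable fun y : (j : Fin n) → E (Fin.succ j) => ∏ x : Fin n, f x.succ (y x) :=
      Finset.measurable_prod _ fun j _ => (hf (Fin.succ j)).comp (measurable_pi_apply j)
    have key := lintegral_prod_mul (μ := (volume : Measure (E 0)))
      (ν := Measure.pi fun j => (volume : Measure (E (Fin.succ j))))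
      (hf 0).aemeasurable hgm.aemeasurable
    refine Eq.trans key ?_
    rw [← volume_pi, ih (fun j => hf (Fin.succ j))]


theorem my_square_complete {V : Type*} [NormedAddCommGroup V] [InnerProductSpace ℝ V]
    {α β η : ℝ} (hα : 0 < α) (hβ : 0 < β) (hη : 0 < η)
    (hη2 : η ^ 2 = α ^ 2 + β ^ 2) (c u : V) :
    ‖c + u‖ ^ 2 / (2 * α ^ 2) + ‖u‖ ^ 2 / (2 * β ^ 2)
      = ‖c‖ ^ 2 / (2 * η ^ 2) + (η ^ 2 / (2 * α ^ 2 * β ^ 2)) * ‖u + (β ^ 2 / η ^ 2) • c‖ ^ 2 := by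
  have h1 : ‖c + u‖ ^ 2 = ‖c‖ ^ 2 + 2 * inner ℝ c u + ‖u‖ ^ 2 := norm_add_sq_real c u
  have h2 : ‖u + (β ^ 2 / η ^ 2) • c‖ ^ 2
      = ‖u‖ ^ 2 + 2 * ((β ^ 2 / η ^ 2) * inner ℝ c u) + (β ^ 2 / η ^ 2) ^ 2 * ‖c‖ ^ 2 := by
    rw [norm_add_sq_real, real_inner_smul_right, norm_smul, real_inner_comm, mul_pow]
    congr 2
    rw [Real.norm_eq_abs, sq_abs]
  rw [h1, h2, hη2]
  have hα' : α ^ 2 ≠ 0 := by positivity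
  have hβ' : β ^ 2 ≠ 0 := by positivity
  have hab : α ^ 2 + β ^ 2 ≠ 0 := by positivity
  field_simp
  ring

theorem my_gauss_lintegral {M : ℕ} {k : ℝ} (hk : 0 < k) :
    ∫⁻ u : EuclideanSpace ℝ (Fin M), ENNReal.ofReal (Real.exp (-(k * ‖u‖ ^ 2)))
      = ENNReal.ofReal ((π / k) ^ ((M : ℝ) / 2)) := by
  have hint : Integrable (fun v : EuclideanSpace ℝ (Fin M) => Real.exp (-(k * ‖v‖ ^ 2))) := by
    have h := GaussianFourier.integrable_cexp_neg_mul_sq_norm_add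
      (V := EuclideanSpace ℝ (Fin M)) (b := (k : ℂ)) (by simpa using hk) 0 0
    refine h.norm.congr (Filter.Eventually.of_forall fun v => ?_)
    simp only [Complex.norm_exp, zero_mul, add_zero, neg_mul,
      Complex.neg_re, Complex.mul_re, Complex.ofReal_re, Complex.ofReal_im]
    norm_num
    norm_cast
    exact Or.inl rfl
  rw [← ofReal_integral_eq_lintegral_ofReal hint
    (Filter.Eventually.of_forall fun v => (Real.exp_pos _).le)]
  congr 1
  rw [show (fun v : EuclideanSpace ℝ (Fin M) => Real.exp (-(k * ‖v‖ ^ 2)))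
    = fun v => Real.exp (-k * ‖v‖ ^ 2) by ext v; rw [neg_mul]]
  rw [GaussianFourier.integral_rexp_neg_mul_sq_norm hk, finrank_euclideanSpace_fin]

theorem my_factor {M : ℕ} {G : EuclideanSpace ℝ (Fin M) → ℝ} (hG : Measurable G)
    (hG0 : ∀ z, 0 ≤ G z) {α β η : ℝ} (hα : 0 < α) (hβ : 0 < β) (hη : 0 < η)
    (hη2 : η ^ 2 = α ^ 2 + β ^ 2) (w : EuclideanSpace ℝ (Fin M)) :
    (∫⁻ q : EuclideanSpace ℝ (Fin M) × EuclideanSpace ℝ (Fin M),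
        ENNReal.ofReal (G q.1 *
          Real.exp (-(‖w - q.1 + q.2‖ ^ 2 / (2 * α ^ 2) + ‖q.2‖ ^ 2 / (2 * β ^ 2)))))
      = ENNReal.ofReal ((2 * π * α ^ 2 * β ^ 2 / (α ^ 2 + β ^ 2)) ^ ((M : ℝ) / 2)) *
        ∫⁻ z : EuclideanSpace ℝ (Fin M),
          ENNReal.ofReal (G z * Real.exp (-‖w - z‖ ^ 2 / (2 * η ^ 2))) := by
  have hk : (0:ℝ) < η ^ 2 / (2 * α ^ 2 * β ^ 2) := by positivity
  have hC : π / (η ^ 2 / (2 * α ^ 2 * β ^ 2)) = 2 * π * α ^ 2 * β ^ 2 / (α ^ 2 + β ^ 2) := by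
    rw [hη2]
    have hα' : α ^ 2 ≠ 0 := by positivity
    have hβ' : β ^ 2 ≠ 0 := by positivity
    have hab : α ^ 2 + β ^ 2 ≠ 0 := by positivity
    field_simp
  have hmeas : Measurable fun q : EuclideanSpace ℝ (Fin M) × EuclideanSpace ℝ (Fin M) =>
      ENNReal.ofReal (G q.1 *
        Real.exp (-(‖w - q.1 + q.2‖ ^ 2 / (2 * α ^ 2) + ‖q.2‖ ^ 2 / (2 * β ^ 2)))) := by
    apply ENNReal.measurable_ofReal.comp
    exact (hG.comp measurable_fst).mul (by fun_prop)
  rw [Measure.volume_eq_prod, lintegral_prod _ hmeas.aemeasurable]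
  have inner_eq : ∀ z : EuclideanSpace ℝ (Fin M),
      (∫⁻ u : EuclideanSpace ℝ (Fin M), ENNReal.ofReal (G z *
        Real.exp (-(‖w - z + u‖ ^ 2 / (2 * α ^ 2) + ‖u‖ ^ 2 / (2 * β ^ 2)))))
      = ENNReal.ofReal ((2 * π * α ^ 2 * β ^ 2 / (α ^ 2 + β ^ 2)) ^ ((M : ℝ) / 2)) *
        ENNReal.ofReal (G z * Real.exp (-‖w - z‖ ^ 2 / (2 * η ^ 2))) := by
    intro z
    have hpt : ∀ u : EuclideanSpace ℝ (Fin M),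
        G z * Real.exp (-(‖w - z + u‖ ^ 2 / (2 * α ^ 2) + ‖u‖ ^ 2 / (2 * β ^ 2)))
        = (G z * Real.exp (-‖w - z‖ ^ 2 / (2 * η ^ 2))) *
          Real.exp (-(η ^ 2 / (2 * α ^ 2 * β ^ 2) * ‖u + (β ^ 2 / η ^ 2) • (w - z)‖ ^ 2)) := by
      intro u
      rw [my_square_complete hα hβ hη hη2 (w - z) u, neg_add, Real.exp_add, neg_div]
      ring
    simp_rw [hpt]
    simp_rw [ENNReal.ofReal_mul (mul_nonneg (hG0 z) (Real.exp_pos _).le)]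
    rw [lintegral_const_mul' _ _ ENNReal.ofReal_ne_top]
    rw [show (∫⁻ u : EuclideanSpace ℝ (Fin M), ENNReal.ofReal
        (Real.exp (-(η ^ 2 / (2 * α ^ 2 * β ^ 2) * ‖u + (β ^ 2 / η ^ 2) • (w - z)‖ ^ 2))))
      = ∫⁻ u : EuclideanSpace ℝ (Fin M), ENNReal.ofReal
        (Real.exp (-(η ^ 2 / (2 * α ^ 2 * β ^ 2) * ‖u‖ ^ 2))) from
      lintegral_add_right_eq_self (fun u => ENNReal.ofReal
        (Real.exp (-(η ^ 2 / (2 * α ^ 2 * β ^ 2) * ‖u‖ ^ 2)))) _]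
    rw [my_gauss_lintegral hk, hC, mul_comm]
  calc (∫⁻ z, ∫⁻ u, ENNReal.ofReal (G (z, u).1 *
          Real.exp (-(‖w - (z, u).1 + (z, u).2‖ ^ 2 / (2 * α ^ 2)
            + ‖(z, u).2‖ ^ 2 / (2 * β ^ 2)))))
      = ∫⁻ z : EuclideanSpace ℝ (Fin M),
          ENNReal.ofReal ((2 * π * α ^ 2 * β ^ 2 / (α ^ 2 + β ^ 2)) ^ ((M : ℝ) / 2)) *
          ENNReal.ofReal (G z * Real.exp (-‖w - z‖ ^ 2 / (2 * η ^ 2))) :=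
        lintegral_congr fun z => inner_eq z
    _ = _ := lintegral_const_mul' _ _ ENNReal.ofReal_ne_top

end AXDAhelper


/-- Multi-term AXDA marginalization identity: the auxiliary variables `(z_i, u_i)` of
the multi-term quadratic coupling integrate out to independent Gaussian smoothings at
scales `η_i` with `η_i² = α_i² + β_i²`, as an equality in `[0,∞]`. Each `g_i` is
valued in `(−∞,∞]` (encoded in `EReal` without the value `⊥`), with `exp(−g_i(z))`
interpreted as `0` when `g_i(z) = ⊤`. -/
theorem stmt18 (I : ℕ) (hI : 1 ≤ I) (Mi : Fin I → ℕ) (hMi : ∀ i, 1 ≤ Mi i)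
    (g : ∀ i, EuclideanSpace ℝ (Fin (Mi i)) → EReal)
    (hg : ∀ i, Measurable (g i)) (hgbot : ∀ i z, g i z ≠ ⊥)
    (α β η : Fin I → ℝ) (hα : ∀ i, 0 < α i) (hβ : ∀ i, 0 < β i)
    (hη : ∀ i, 0 < η i) (hη2 : ∀ i, η i ^ 2 = α i ^ 2 + β i ^ 2)
    (w : ∀ i, EuclideanSpace ℝ (Fin (Mi i)))
    (expg : ∀ i, EuclideanSpace ℝ (Fin (Mi i)) → ℝ)
    (hexpg : ∀ i z, expg i z = if g i z = ⊤ then 0 else Real.exp (-(g i z).toReal)) :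
    (∫⁻ p : ∀ i, EuclideanSpace ℝ (Fin (Mi i)) × EuclideanSpace ℝ (Fin (Mi i)),
        ENNReal.ofReal ((∏ i, expg i (p i).1) *
          Real.exp (-∑ i, (‖w i - (p i).1 + (p i).2‖ ^ 2 / (2 * α i ^ 2)
            + ‖(p i).2‖ ^ 2 / (2 * β i ^ 2)))))
      = (∏ i, ENNReal.ofReal
            ((2 * Real.pi * α i ^ 2 * β i ^ 2 / (α i ^ 2 + β i ^ 2)) ^ ((Mi i : ℝ) / 2))) *
        ∏ i, ∫⁻ z : EuclideanSpace ℝ (Fin (Mi i)),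
          ENNReal.ofReal (expg i z * Real.exp (-‖w i - z‖ ^ 2 / (2 * η i ^ 2))) := by
  have hexpg0 : ∀ i z, 0 ≤ expg i z := by
    intro i z
    rw [hexpg]
    split
    · exact le_refl 0
    · exact (Real.exp_pos _).le
  have hexpgm : ∀ i, Measurable (expg i) := by
    intro i
    rw [show expg i = fun z => if g i z = ⊤ then 0 else Real.exp (-(g i z).toReal) from
      funext (hexpg i)]
    exact Measurable.ite ((hg i) (measurableSet_singleton ⊤)) measurable_const
      (Real.measurable_exp.comp ((hg i).ereal_toReal.neg))
  have hFm : ∀ i, Measurable (fun q : EuclideanSpace ℝ (Fin (Mi i)) × EuclideanSpace ℝ (Fin (Mi i)) =>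
      ENNReal.ofReal (expg i q.1 *
        Real.exp (-(‖w i - q.1 + q.2‖ ^ 2 / (2 * α i ^ 2) + ‖q.2‖ ^ 2 / (2 * β i ^ 2))))) := by
    intro i
    exact ENNReal.measurable_ofReal.comp
      (((hexpgm i).comp measurable_fst).mul (by fun_prop))
  have hpt : ∀ p : ∀ i, EuclideanSpace ℝ (Fin (Mi i)) × EuclideanSpace ℝ (Fin (Mi i)),
      ENNReal.ofReal ((∏ i, expg i (p i).1) *
        Real.exp (-∑ i, (‖w i - (p i).1 + (p i).2‖ ^ 2 / (2 * α i ^ 2)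
          + ‖(p i).2‖ ^ 2 / (2 * β i ^ 2))))
      = ∏ i, ENNReal.ofReal (expg i (p i).1 *
          Real.exp (-(‖w i - (p i).1 + (p i).2‖ ^ 2 / (2 * α i ^ 2)
            + ‖(p i).2‖ ^ 2 / (2 * β i ^ 2)))) := by
    intro p
    rw [← Finset.sum_neg_distrib, Real.exp_sum, ← Finset.prod_mul_distrib]
    exact ENNReal.ofReal_prod_of_nonneg fun i _ =>
      mul_nonneg (hexpg0 i _) (Real.exp_pos _).le
  simp_rw [hpt]
  rw [my_lintegral_fin_prod hFm]
  rw [← Finset.prod_mul_distrib]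
  exact Finset.prod_congr rfl fun i _ =>
    my_factor (hexpgm i) (hexpg0 i) (hα i) (hβ i) (hη i) (hη2 i) (w i)
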